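/- arXiv:2208.13706 — 7 statements merged into one kernel-verified Lean document; each statement's English description precedes it below -/
import Mathlib

section
/- Let 𝕀 = diag(I₁, I₂, I₃) with I₁, I₂, I₃ nonzero, let ξ₁, ξ₂, ξ₃ ∈ ℝ³, let s be a 3 × 3 real antisymmetric matrix, and let ϑ ∈ ℝ. Define Ω̃(Π) := 𝕀⁻¹Π − (1/2) Σ_{i,j} s^{ij} (ξ_i × ξ_j). If Π : ℝ → ℝ³ is differentiable and satisfies the deterministic Lévy-area-corrected dissipative rigid body equation Π'(t) = Π(t) × Ω̃(Π(t)) + ϑ Π(t) × (Π(t) × Ω̃(Π(t))) for all t, then the Euclidean norm ‖Π(t)‖ is constant in t (equal to ‖Π(0)‖). -/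
open Matrix

/-- Let `𝕀 = diag(I₁, I₂, I₃)` with nonzero entries `Iv i`, let
`ξ₁, ξ₂, ξ₃ ∈ ℝ³`, `s` a `3 × 3` real antisymmetric matrix, `ϑ ∈ ℝ`, and set
`Ω̃(Π) = 𝕀⁻¹Π − (1/2) Σ_{i,j} s^{ij} (ξᵢ × ξⱼ)`.  Any differentiable solution of the
Lévy-area-corrected dissipative rigid body equation
`Π' = Π × Ω̃(Π) + ϑ Π × (Π × Ω̃(Π))` has constant Euclidean norm. -/
theorem rigid_body_levy_dissipative_norm_const
    (Iv : Fin 3 → ℝ) (hIv : ∀ i, Iv i ≠ 0)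
    (ξ : Fin 3 → Fin 3 → ℝ) (s : Matrix (Fin 3) (Fin 3) ℝ) (hs : sᵀ = -s) (ϑ : ℝ)
    (Ω : (Fin 3 → ℝ) → Fin 3 → ℝ)
    (hΩ : ∀ p, Ω p = (fun i => p i / Iv i) - ((1 : ℝ)/2) • ∑ i, ∑ j, s i j • (ξ i ⨯₃ ξ j))
    (P : ℝ → Fin 3 → ℝ)
    (hP : ∀ t, HasDerivAt P
      (P t ⨯₃ Ω (P t) + ϑ • (P t ⨯₃ (P t ⨯₃ Ω (P t)))) t) (t : ℝ) :
    Real.sqrt (∑ i, P t i ^ 2) = Real.sqrt (∑ i, P 0 i ^ 2) := by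
  suffices h : (fun t => ∑ i, P t i ^ 2) t = (fun t => ∑ i, P 0 i ^ 2) t by
    simp only at h; rw [h]
  have key : ∀ u : ℝ, HasDerivAt (fun t => ∑ i, P t i ^ 2) 0 u := by
    intro u
    set D := P u ⨯₃ Ω (P u) + ϑ • (P u ⨯₃ (P u ⨯₃ Ω (P u))) with hD
    have hcomp : ∀ i, HasDerivAt (fun t => P t i) (D i) u := by
      intro i
      exact ((ContinuousLinearMap.proj i : (Fin 3 → ℝ) →L[ℝ] ℝ).hasFDerivAt.comp_hasDerivAt u (hP u))
    have hsum : HasDerivAt (fun t => ∑ i, P t i ^ 2)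
        (∑ i, 2 * P u i * D i) u := by
      apply HasDerivAt.fun_sum
      intro i _
      simpa [mul_comm, mul_assoc, mul_left_comm] using ((hcomp i).fun_pow 2)
    have hzero : (∑ i, 2 * P u i * D i) = 0 := by
      have h1 : P u ⬝ᵥ (P u ⨯₃ Ω (P u)) = 0 := dot_self_cross _ _
      have h2 : P u ⬝ᵥ (P u ⨯₃ (P u ⨯₃ Ω (P u))) = 0 := dot_self_cross _ _
      have : ∑ i, 2 * P u i * D i = 2 * (P u ⬝ᵥ (P u ⨯₃ Ω (P u)))
          + 2 * ϑ * (P u ⬝ᵥ (P u ⨯₃ (P u ⨯₃ Ω (P u)))) := by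
        simp only [hD, dotProduct, Pi.add_apply, Pi.smul_apply, smul_eq_mul,
          Finset.mul_sum]
        rw [← Finset.sum_add_distrib]
        congr 1; funext i; ring
      rw [this, h1, h2]; ring
    rw [← hzero]; exact hsum
  have := is_const_of_deriv_eq_zero (f := fun t => ∑ i, P t i ^ 2)
    (fun x => (key x).differentiableAt) (fun x => (key x).deriv) t 0
  simpa using this
end

section
/- Let h̃ : ℝ³ → ℝ be continuously differentiable, ϑ ∈ ℝ, and let Π : ℝ → ℝ³ be differentiable with Π'(t) = Π(t) × ∇h̃(Π(t)) + ϑ Π(t) × (Π(t) × ∇h̃(Π(t))) for all t. Then the energy h̃(Π(t)) is differentiable in t with derivative (d/dt) h̃(Π(t)) = −ϑ ‖Π(t) × ∇h̃(Π(t))‖². In particular, for ϑ > 0 the energy is nonincreasing along solutions. -/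
open Matrix

/-- The (Euclidean) gradient of a function on `ℝ³ = Fin 3 → ℝ`. -/
noncomputable def grad (f : (Fin 3 → ℝ) → ℝ) (x : Fin 3 → ℝ) : Fin 3 → ℝ :=
  fun i => fderiv ℝ f x (Pi.single i 1)

lemma fderiv_apply_eq_sum (f : (Fin 3 → ℝ) → ℝ) (x v : Fin 3 → ℝ) :
    fderiv ℝ f x v = ∑ i, v i * grad f x i := by
  have hv : v = ∑ i, v i • (Pi.single i 1 : Fin 3 → ℝ) := by
    funext j
    simp [Pi.single_apply]
  conv_lhs => rw [hv]
  rw [map_sum]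
  simp [grad, mul_comm]

/-- Along any differentiable solution of
`Π' = Π × ∇h̃(Π) + ϑ Π × (Π × ∇h̃(Π))` (with `h̃ : ℝ³ → ℝ` continuously differentiable),
the energy `h̃(Π(t))` is differentiable in `t` with derivative
`−ϑ ‖Π(t) × ∇h̃(Π(t))‖²`. -/
theorem double_bracket_energy_dissipation
    (h : (Fin 3 → ℝ) → ℝ) (hh : ContDiff ℝ 1 h) (ϑ : ℝ)
    (P : ℝ → Fin 3 → ℝ)
    (hP : ∀ t, HasDerivAt P
      (P t ⨯₃ grad h (P t) + ϑ • (P t ⨯₃ (P t ⨯₃ grad h (P t)))) t) (t : ℝ) :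
    HasDerivAt (fun τ => h (P τ)) (-ϑ * ∑ i, ((P t ⨯₃ grad h (P t)) i) ^ 2) t := by
  have hdf : HasFDerivAt h (fderiv ℝ h (P t)) (P t) :=
    ((hh.differentiable one_ne_zero) (P t)).hasFDerivAt
  have key := hdf.comp_hasDerivAt t (hP t)
  refine key.congr_deriv (Eq.symm ?_)
  rw [fderiv_apply_eq_sum]
  set a := P t
  set g := grad h a
  have h1 : ∑ i, (a ⨯₃ g) i * g i = 0 := by
    simp [cross_apply, Fin.sum_univ_three]; ring
  have h2 : ∑ i, (a ⨯₃ (a ⨯₃ g)) i * g i = -∑ i, ((a ⨯₃ g) i) ^ 2 := by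
    simp [cross_apply, Fin.sum_univ_three]; ring
  calc -ϑ * ∑ i, ((a ⨯₃ g) i) ^ 2
      = ∑ i, (a ⨯₃ g) i * g i + ϑ * ∑ i, (a ⨯₃ (a ⨯₃ g)) i * g i := by
        rw [h1, h2]; ring
    _ = ∑ i, ((a ⨯₃ g + ϑ • (a ⨯₃ (a ⨯₃ g))) i) * g i := by
        rw [Finset.mul_sum, ← Finset.sum_add_distrib]
        refine Finset.sum_congr rfl fun i _ => ?_
        simp [Pi.add_apply]; ring
end

section
/- Let 𝕀 = diag(I₁, I₂, I₃) with I₁, I₂, I₃ nonzero and let a ∈ ℝ³ be a constant vector. If Π : ℝ → ℝ³ is differentiable and satisfies the Lévy-area-corrected deterministic rigid body equation Π'(t) = (𝕀⁻¹Π(t) + a) × Π(t), then both the Casimir ‖Π(t)‖ and the modified Hamiltonian h̃(Π(t)) := (1/2) Π(t) · 𝕀⁻¹Π(t) + a · Π(t) are constant in t. -/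
open Matrix

/-- Let `𝕀 = diag(I₁, I₂, I₃)` with nonzero entries `Iv i` and let `a ∈ ℝ³`
be constant. Along any differentiable solution of the Lévy-area-corrected deterministic rigid
body equation `Π' = (𝕀⁻¹Π + a) × Π`, both the Casimir `‖Π‖` (Euclidean norm) and the modified
Hamiltonian `h̃(Π) = (1/2) Π · 𝕀⁻¹Π + a · Π` are constant in time. -/
theorem rigid_body_levy_conserved
    (Iv : Fin 3 → ℝ) (hIv : ∀ i, Iv i ≠ 0) (a : Fin 3 → ℝ)
    (P : ℝ → Fin 3 → ℝ)
    (hP : ∀ t, HasDerivAt P (((fun i => P t i / Iv i) + a) ⨯₃ P t) t) (t : ℝ) :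
    Real.sqrt (∑ i, P t i ^ 2) = Real.sqrt (∑ i, P 0 i ^ 2) ∧
      ((1 : ℝ)/2) * (P t ⬝ᵥ fun i => P t i / Iv i) + a ⬝ᵥ P t
        = ((1 : ℝ)/2) * (P 0 ⬝ᵥ fun i => P 0 i / Iv i) + a ⬝ᵥ P 0 := by
  have hcomp : ∀ s (i : Fin 3), HasDerivAt (fun u => P u i)
      ((((fun j => P s j / Iv j) + a) ⨯₃ P s) i) s := by
    intro s i
    exact (hasDerivAt_pi.mp (hP s)) i
  have h1 : ∀ s, HasDerivAt (fun u => P u 0 ^ 2 + P u 1 ^ 2 + P u 2 ^ 2) 0 s := by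
    intro s
    have h := fun i => (hcomp s i).fun_pow 2
    have H := ((h 0).fun_add (h 1)).fun_add (h 2)
    refine H.congr_deriv ?_
    simp only [cross_apply, Pi.add_apply, cons_val_zero, cons_val_one, head_cons,
      cons_val_two, tail_cons]
    ring
  have h2 : ∀ s, HasDerivAt (fun u =>
      (1:ℝ)/2 * (P u 0 * (P u 0 / Iv 0) + P u 1 * (P u 1 / Iv 1) + P u 2 * (P u 2 / Iv 2))
        + (a 0 * P u 0 + a 1 * P u 1 + a 2 * P u 2)) 0 s := by
    intro s
    have h := fun i : Fin 3 => (hcomp s i).fun_mul ((hcomp s i).div_const (Iv i))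
    have ha := fun i : Fin 3 => (hcomp s i).const_mul (a i)
    have H := ((((h 0).fun_add (h 1)).fun_add (h 2)).const_mul ((1:ℝ)/2)).fun_add
      (((ha 0).fun_add (ha 1)).fun_add (ha 2))
    refine H.congr_deriv ?_
    simp only [cross_apply, Pi.add_apply, cons_val_zero, cons_val_one, head_cons,
      cons_val_two, tail_cons]
    field_simp
    ring
  have const1 : ∀ s, (P s 0 ^ 2 + P s 1 ^ 2 + P s 2 ^ 2)
      = (P 0 0 ^ 2 + P 0 1 ^ 2 + P 0 2 ^ 2) := by
    intro s
    exact is_const_of_deriv_eq_zero (fun u => (h1 u).differentiableAt)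
      (fun u => (h1 u).deriv) s 0
  have const2 : ∀ s,
      ((1:ℝ)/2 * (P s 0 * (P s 0 / Iv 0) + P s 1 * (P s 1 / Iv 1) + P s 2 * (P s 2 / Iv 2))
        + (a 0 * P s 0 + a 1 * P s 1 + a 2 * P s 2))
      = ((1:ℝ)/2 * (P 0 0 * (P 0 0 / Iv 0) + P 0 1 * (P 0 1 / Iv 1) + P 0 2 * (P 0 2 / Iv 2))
        + (a 0 * P 0 0 + a 1 * P 0 1 + a 2 * P 0 2)) := by
    intro s
    exact is_const_of_deriv_eq_zero (fun u => (h2 u).differentiableAt)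
      (fun u => (h2 u).deriv) s 0
  constructor
  · rw [Fin.sum_univ_three, Fin.sum_univ_three]
    rw [const1 t]
  · simp only [dotProduct, Fin.sum_univ_three]
    exact const2 t
end

section
/- Let p : ℝ³ → ℝ be twice continuously differentiable. Then for every Π ∈ ℝ³, Σ_{i=1}^{3} (Π × e_i) · ∇((Π × e_i) · ∇p)(Π) = −div(Π ↦ Π × (Π × ∇p(Π)))(Π), where e₁, e₂, e₃ is the standard basis of ℝ³. -/
open Matrix

/-- The divergence of a vector field on `ℝ³ = Fin 3 → ℝ`. -/
noncomputable def div3 (F : (Fin 3 → ℝ) → Fin 3 → ℝ) (x : Fin 3 → ℝ) : ℝ :=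
  ∑ i, fderiv ℝ F x (Pi.single i 1) i

set_option maxHeartbeats 2000000

/-- For `p : ℝ³ → ℝ` twice continuously differentiable and every `Π ∈ ℝ³`,
`Σᵢ (Π × eᵢ) · ∇((· × eᵢ) · ∇p)(Π) = −div(x ↦ x × (x × ∇p(x)))(Π)`, i.e. the sum of second-order
directional derivatives of `p` along the vector fields `x ↦ x × eᵢ` equals minus the divergence
of the double-bracket vector field. -/
theorem ito_stratonovich_correction_divergence_form
    (p : (Fin 3 → ℝ) → ℝ) (hp : ContDiff ℝ 2 p) (P : Fin 3 → ℝ) :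
    ∑ i, (P ⨯₃ (Pi.single i 1 : Fin 3 → ℝ))
        ⬝ᵥ grad (fun x => (x ⨯₃ (Pi.single i 1 : Fin 3 → ℝ)) ⬝ᵥ grad p x) P
      = - div3 (fun x => x ⨯₃ (x ⨯₃ grad p x)) P := by
  have hp1 : Differentiable ℝ p := hp.differentiable (by norm_num)
  have hD : DifferentiableAt ℝ (fderiv ℝ p) P :=
    ((hp.fderiv_right (m := 1) (by norm_num)).differentiable one_ne_zero).differentiableAt
  have Hsymm : ∀ v w : Fin 3 → ℝ,
      fderiv ℝ (fderiv ℝ p) P v w = fderiv ℝ (fderiv ℝ p) P w v :=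
    second_derivative_symmetric (fun y => (hp1 y).hasFDerivAt) hD.hasFDerivAt
  have hG : ∀ j : Fin 3, HasFDerivAt (fun x => fderiv ℝ p x (Pi.single j 1))
      ((fderiv ℝ (fderiv ℝ p) P).flip (Pi.single j 1)) P := by
    intro j
    have h := hD.hasFDerivAt.clm_apply (hasFDerivAt_const (Pi.single j 1) P)
    simpa using h
  have hcoord : ∀ a : Fin 3, HasFDerivAt (fun x : Fin 3 → ℝ => x a)
      (ContinuousLinearMap.proj (R := ℝ) a) P := by
    intro a
    have h := (ContinuousLinearMap.proj (R := ℝ) (φ := fun _ : Fin 3 => ℝ) a).hasFDerivAt (x := P)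
    exact h
  have hFeq0 : (fun x : Fin 3 → ℝ => (x ⨯₃ (Pi.single (0:Fin 3) 1 : Fin 3 → ℝ)) ⬝ᵥ grad p x)
      = fun x : Fin 3 → ℝ => x 2 * fderiv ℝ p x (Pi.single (1:Fin 3) 1 : Fin 3 → ℝ) - x 1 * fderiv ℝ p x (Pi.single (2:Fin 3) 1 : Fin 3 → ℝ) := by
    funext x
    simp [grad, cross_apply, dotProduct, Fin.sum_univ_three, Matrix.cons_val_zero, Matrix.cons_val_one, Matrix.head_cons, Matrix.cons_val_two, Matrix.tail_cons, Pi.single_apply]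
    ring
  have hFeq1 : (fun x : Fin 3 → ℝ => (x ⨯₃ (Pi.single (1:Fin 3) 1 : Fin 3 → ℝ)) ⬝ᵥ grad p x)
      = fun x : Fin 3 → ℝ => x 0 * fderiv ℝ p x (Pi.single (2:Fin 3) 1 : Fin 3 → ℝ) - x 2 * fderiv ℝ p x (Pi.single (0:Fin 3) 1 : Fin 3 → ℝ) := by
    funext x
    simp [grad, cross_apply, dotProduct, Fin.sum_univ_three, Matrix.cons_val_zero, Matrix.cons_val_one, Matrix.head_cons, Matrix.cons_val_two, Matrix.tail_cons, Pi.single_apply]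
    ring
  have hFeq2 : (fun x : Fin 3 → ℝ => (x ⨯₃ (Pi.single (2:Fin 3) 1 : Fin 3 → ℝ)) ⬝ᵥ grad p x)
      = fun x : Fin 3 → ℝ => x 1 * fderiv ℝ p x (Pi.single (0:Fin 3) 1 : Fin 3 → ℝ) - x 0 * fderiv ℝ p x (Pi.single (1:Fin 3) 1 : Fin 3 → ℝ) := by
    funext x
    simp [grad, cross_apply, dotProduct, Fin.sum_univ_three, Matrix.cons_val_zero, Matrix.cons_val_one, Matrix.head_cons, Matrix.cons_val_two, Matrix.tail_cons, Pi.single_apply]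
    ring
  have hf0 := ((hcoord 2).mul (hG 1)).sub ((hcoord 1).mul (hG 2))
  have hd0 : fderiv ℝ (fun x : Fin 3 → ℝ =>
      x 2 * fderiv ℝ p x (Pi.single (1:Fin 3) 1 : Fin 3 → ℝ) - x 1 * fderiv ℝ p x (Pi.single (2:Fin 3) 1 : Fin 3 → ℝ)) P = _ := hf0.fderiv
  have hf1 := ((hcoord 0).mul (hG 2)).sub ((hcoord 2).mul (hG 0))
  have hd1 : fderiv ℝ (fun x : Fin 3 → ℝ =>
      x 0 * fderiv ℝ p x (Pi.single (2:Fin 3) 1 : Fin 3 → ℝ) - x 2 * fderiv ℝ p x (Pi.single (0:Fin 3) 1 : Fin 3 → ℝ)) P = _ := hf1.fderiv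
  have hf2 := ((hcoord 1).mul (hG 0)).sub ((hcoord 0).mul (hG 1))
  have hd2 : fderiv ℝ (fun x : Fin 3 → ℝ =>
      x 1 * fderiv ℝ p x (Pi.single (0:Fin 3) 1 : Fin 3 → ℝ) - x 0 * fderiv ℝ p x (Pi.single (1:Fin 3) 1 : Fin 3 → ℝ)) P = _ := hf2.fderiv
  have hL0 : (P ⨯₃ (Pi.single (0:Fin 3) 1 : Fin 3 → ℝ))
      ⬝ᵥ grad (fun x => (x ⨯₃ (Pi.single (0:Fin 3) 1 : Fin 3 → ℝ)) ⬝ᵥ grad p x) P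
      = P 1 * P 1 * fderiv ℝ (fderiv ℝ p) P (Pi.single (2:Fin 3) 1 : Fin 3 → ℝ) (Pi.single (2:Fin 3) 1 : Fin 3 → ℝ) - P 1 * P 2 * fderiv ℝ (fderiv ℝ p) P (Pi.single (1:Fin 3) 1 : Fin 3 → ℝ) (Pi.single (2:Fin 3) 1 : Fin 3 → ℝ) - P 1 * P 2 * fderiv ℝ (fderiv ℝ p) P (Pi.single (2:Fin 3) 1 : Fin 3 → ℝ) (Pi.single (1:Fin 3) 1 : Fin 3 → ℝ) - P 1 * fderiv ℝ p P (Pi.single (1:Fin 3) 1 : Fin 3 → ℝ) + P 2 * P 2 * fderiv ℝ (fderiv ℝ p) P (Pi.single (1:Fin 3) 1 : Fin 3 → ℝ) (Pi.single (1:Fin 3) 1 : Fin 3 → ℝ) - P 2 * fderiv ℝ p P (Pi.single (2:Fin 3) 1 : Fin 3 → ℝ) := by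
    rw [hFeq0]
    simp only [grad, dotProduct, Fin.sum_univ_three, hd0]
    simp [grad, cross_apply, dotProduct, Fin.sum_univ_three, Matrix.cons_val_zero, Matrix.cons_val_one, Matrix.head_cons, Matrix.cons_val_two, Matrix.tail_cons, Pi.single_apply, ContinuousLinearMap.sub_apply, ContinuousLinearMap.add_apply, ContinuousLinearMap.smul_apply, ContinuousLinearMap.flip_apply, ContinuousLinearMap.proj_apply, smul_eq_mul, Pi.single_apply]
    ring
  have hL1 : (P ⨯₃ (Pi.single (1:Fin 3) 1 : Fin 3 → ℝ))
      ⬝ᵥ grad (fun x => (x ⨯₃ (Pi.single (1:Fin 3) 1 : Fin 3 → ℝ)) ⬝ᵥ grad p x) P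
      = P 0 * P 0 * fderiv ℝ (fderiv ℝ p) P (Pi.single (2:Fin 3) 1 : Fin 3 → ℝ) (Pi.single (2:Fin 3) 1 : Fin 3 → ℝ) - P 0 * P 2 * fderiv ℝ (fderiv ℝ p) P (Pi.single (0:Fin 3) 1 : Fin 3 → ℝ) (Pi.single (2:Fin 3) 1 : Fin 3 → ℝ) - P 0 * P 2 * fderiv ℝ (fderiv ℝ p) P (Pi.single (2:Fin 3) 1 : Fin 3 → ℝ) (Pi.single (0:Fin 3) 1 : Fin 3 → ℝ) - P 0 * fderiv ℝ p P (Pi.single (0:Fin 3) 1 : Fin 3 → ℝ) + P 2 * P 2 * fderiv ℝ (fderiv ℝ p) P (Pi.single (0:Fin 3) 1 : Fin 3 → ℝ) (Pi.single (0:Fin 3) 1 : Fin 3 → ℝ) - P 2 * fderiv ℝ p P (Pi.single (2:Fin 3) 1 : Fin 3 → ℝ) := by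
    rw [hFeq1]
    simp only [grad, dotProduct, Fin.sum_univ_three, hd1]
    simp [grad, cross_apply, dotProduct, Fin.sum_univ_three, Matrix.cons_val_zero, Matrix.cons_val_one, Matrix.head_cons, Matrix.cons_val_two, Matrix.tail_cons, Pi.single_apply, ContinuousLinearMap.sub_apply, ContinuousLinearMap.add_apply, ContinuousLinearMap.smul_apply, ContinuousLinearMap.flip_apply, ContinuousLinearMap.proj_apply, smul_eq_mul, Pi.single_apply]
    ring
  have hL2 : (P ⨯₃ (Pi.single (2:Fin 3) 1 : Fin 3 → ℝ))
      ⬝ᵥ grad (fun x => (x ⨯₃ (Pi.single (2:Fin 3) 1 : Fin 3 → ℝ)) ⬝ᵥ grad p x) P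
      = P 0 * P 0 * fderiv ℝ (fderiv ℝ p) P (Pi.single (1:Fin 3) 1 : Fin 3 → ℝ) (Pi.single (1:Fin 3) 1 : Fin 3 → ℝ) - P 0 * P 1 * fderiv ℝ (fderiv ℝ p) P (Pi.single (0:Fin 3) 1 : Fin 3 → ℝ) (Pi.single (1:Fin 3) 1 : Fin 3 → ℝ) - P 0 * P 1 * fderiv ℝ (fderiv ℝ p) P (Pi.single (1:Fin 3) 1 : Fin 3 → ℝ) (Pi.single (0:Fin 3) 1 : Fin 3 → ℝ) - P 0 * fderiv ℝ p P (Pi.single (0:Fin 3) 1 : Fin 3 → ℝ) + P 1 * P 1 * fderiv ℝ (fderiv ℝ p) P (Pi.single (0:Fin 3) 1 : Fin 3 → ℝ) (Pi.single (0:Fin 3) 1 : Fin 3 → ℝ) - P 1 * fderiv ℝ p P (Pi.single (1:Fin 3) 1 : Fin 3 → ℝ) := by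
    rw [hFeq2]
    simp only [grad, dotProduct, Fin.sum_univ_three, hd2]
    simp [grad, cross_apply, dotProduct, Fin.sum_univ_three, Matrix.cons_val_zero, Matrix.cons_val_one, Matrix.head_cons, Matrix.cons_val_two, Matrix.tail_cons, Pi.single_apply, ContinuousLinearMap.sub_apply, ContinuousLinearMap.add_apply, ContinuousLinearMap.smul_apply, ContinuousLinearMap.flip_apply, ContinuousLinearMap.proj_apply, smul_eq_mul, Pi.single_apply]
    ring
  have hGeq0 : (fun x : Fin 3 → ℝ => (x ⨯₃ (x ⨯₃ grad p x)) (0 : Fin 3))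
      = fun x : Fin 3 → ℝ => x 0 * x 1 * fderiv ℝ p x (Pi.single (1:Fin 3) 1 : Fin 3 → ℝ) + x 0 * x 2 * fderiv ℝ p x (Pi.single (2:Fin 3) 1 : Fin 3 → ℝ) - x 1 * x 1 * fderiv ℝ p x (Pi.single (0:Fin 3) 1 : Fin 3 → ℝ) - x 2 * x 2 * fderiv ℝ p x (Pi.single (0:Fin 3) 1 : Fin 3 → ℝ) := by
    funext x
    simp [grad, cross_apply, dotProduct, Fin.sum_univ_three, Matrix.cons_val_zero, Matrix.cons_val_one, Matrix.head_cons, Matrix.cons_val_two, Matrix.tail_cons, Pi.single_apply]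
    ring
  have hc0 := ((((hcoord 0).mul (hcoord 1)).mul (hG 1)).add
      (((hcoord 0).mul (hcoord 2)).mul (hG 2))).sub
      (((hcoord 1).mul (hcoord 1)).mul (hG 0)) |>.sub
      (((hcoord 2).mul (hcoord 2)).mul (hG 0))
  have he0 : fderiv ℝ (fun x : Fin 3 → ℝ => x 0 * x 1 * fderiv ℝ p x (Pi.single (1:Fin 3) 1 : Fin 3 → ℝ) + x 0 * x 2 * fderiv ℝ p x (Pi.single (2:Fin 3) 1 : Fin 3 → ℝ) - x 1 * x 1 * fderiv ℝ p x (Pi.single (0:Fin 3) 1 : Fin 3 → ℝ) - x 2 * x 2 * fderiv ℝ p x (Pi.single (0:Fin 3) 1 : Fin 3 → ℝ)) P = _ := hc0.fderiv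
  have hFC0 : DifferentiableAt ℝ (fun x : Fin 3 → ℝ => (x ⨯₃ (x ⨯₃ grad p x)) (0 : Fin 3)) P := by
    rw [hGeq0]; exact hc0.differentiableAt
  have hGeq1 : (fun x : Fin 3 → ℝ => (x ⨯₃ (x ⨯₃ grad p x)) (1 : Fin 3))
      = fun x : Fin 3 → ℝ => x 0 * x 1 * fderiv ℝ p x (Pi.single (0:Fin 3) 1 : Fin 3 → ℝ) + x 1 * x 2 * fderiv ℝ p x (Pi.single (2:Fin 3) 1 : Fin 3 → ℝ) - x 0 * x 0 * fderiv ℝ p x (Pi.single (1:Fin 3) 1 : Fin 3 → ℝ) - x 2 * x 2 * fderiv ℝ p x (Pi.single (1:Fin 3) 1 : Fin 3 → ℝ) := by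
    funext x
    simp [grad, cross_apply, dotProduct, Fin.sum_univ_three, Matrix.cons_val_zero, Matrix.cons_val_one, Matrix.head_cons, Matrix.cons_val_two, Matrix.tail_cons, Pi.single_apply]
    ring
  have hc1 := ((((hcoord 0).mul (hcoord 1)).mul (hG 0)).add
      (((hcoord 1).mul (hcoord 2)).mul (hG 2))).sub
      (((hcoord 0).mul (hcoord 0)).mul (hG 1)) |>.sub
      (((hcoord 2).mul (hcoord 2)).mul (hG 1))
  have he1 : fderiv ℝ (fun x : Fin 3 → ℝ => x 0 * x 1 * fderiv ℝ p x (Pi.single (0:Fin 3) 1 : Fin 3 → ℝ) + x 1 * x 2 * fderiv ℝ p x (Pi.single (2:Fin 3) 1 : Fin 3 → ℝ) - x 0 * x 0 * fderiv ℝ p x (Pi.single (1:Fin 3) 1 : Fin 3 → ℝ) - x 2 * x 2 * fderiv ℝ p x (Pi.single (1:Fin 3) 1 : Fin 3 → ℝ)) P = _ := hc1.fderiv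
  have hFC1 : DifferentiableAt ℝ (fun x : Fin 3 → ℝ => (x ⨯₃ (x ⨯₃ grad p x)) (1 : Fin 3)) P := by
    rw [hGeq1]; exact hc1.differentiableAt
  have hGeq2 : (fun x : Fin 3 → ℝ => (x ⨯₃ (x ⨯₃ grad p x)) (2 : Fin 3))
      = fun x : Fin 3 → ℝ => x 0 * x 2 * fderiv ℝ p x (Pi.single (0:Fin 3) 1 : Fin 3 → ℝ) + x 1 * x 2 * fderiv ℝ p x (Pi.single (1:Fin 3) 1 : Fin 3 → ℝ) - x 0 * x 0 * fderiv ℝ p x (Pi.single (2:Fin 3) 1 : Fin 3 → ℝ) - x 1 * x 1 * fderiv ℝ p x (Pi.single (2:Fin 3) 1 : Fin 3 → ℝ) := by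
    funext x
    simp [grad, cross_apply, dotProduct, Fin.sum_univ_three, Matrix.cons_val_zero, Matrix.cons_val_one, Matrix.head_cons, Matrix.cons_val_two, Matrix.tail_cons, Pi.single_apply]
    ring
  have hc2 := ((((hcoord 0).mul (hcoord 2)).mul (hG 0)).add
      (((hcoord 1).mul (hcoord 2)).mul (hG 1))).sub
      (((hcoord 0).mul (hcoord 0)).mul (hG 2)) |>.sub
      (((hcoord 1).mul (hcoord 1)).mul (hG 2))
  have he2 : fderiv ℝ (fun x : Fin 3 → ℝ => x 0 * x 2 * fderiv ℝ p x (Pi.single (0:Fin 3) 1 : Fin 3 → ℝ) + x 1 * x 2 * fderiv ℝ p x (Pi.single (1:Fin 3) 1 : Fin 3 → ℝ) - x 0 * x 0 * fderiv ℝ p x (Pi.single (2:Fin 3) 1 : Fin 3 → ℝ) - x 1 * x 1 * fderiv ℝ p x (Pi.single (2:Fin 3) 1 : Fin 3 → ℝ)) P = _ := hc2.fderiv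
  have hFC2 : DifferentiableAt ℝ (fun x : Fin 3 → ℝ => (x ⨯₃ (x ⨯₃ grad p x)) (2 : Fin 3)) P := by
    rw [hGeq2]; exact hc2.differentiableAt
  have hdiffF : ∀ i : Fin 3, DifferentiableAt ℝ
      (fun x : Fin 3 → ℝ => (x ⨯₃ (x ⨯₃ grad p x)) i) P := by
    intro i
    fin_cases i
    exacts [hFC0, hFC1, hFC2]
  have hpi : fderiv ℝ (fun x : Fin 3 → ℝ => x ⨯₃ (x ⨯₃ grad p x)) P
      = ContinuousLinearMap.pi
        (fun i => fderiv ℝ (fun x : Fin 3 → ℝ => (x ⨯₃ (x ⨯₃ grad p x)) i) P) :=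
    fderiv_pi hdiffF
  have hR0 : fderiv ℝ (fun x : Fin 3 → ℝ => x ⨯₃ (x ⨯₃ grad p x)) P
      (Pi.single (0:Fin 3) 1) (0:Fin 3)
      = P 0 * P 1 * fderiv ℝ (fderiv ℝ p) P (Pi.single (0:Fin 3) 1 : Fin 3 → ℝ) (Pi.single (1:Fin 3) 1 : Fin 3 → ℝ) + P 0 * P 2 * fderiv ℝ (fderiv ℝ p) P (Pi.single (0:Fin 3) 1 : Fin 3 → ℝ) (Pi.single (2:Fin 3) 1 : Fin 3 → ℝ) - P 1 * P 1 * fderiv ℝ (fderiv ℝ p) P (Pi.single (0:Fin 3) 1 : Fin 3 → ℝ) (Pi.single (0:Fin 3) 1 : Fin 3 → ℝ) + P 1 * fderiv ℝ p P (Pi.single (1:Fin 3) 1 : Fin 3 → ℝ) - P 2 * P 2 * fderiv ℝ (fderiv ℝ p) P (Pi.single (0:Fin 3) 1 : Fin 3 → ℝ) (Pi.single (0:Fin 3) 1 : Fin 3 → ℝ) + P 2 * fderiv ℝ p P (Pi.single (2:Fin 3) 1 : Fin 3 → ℝ) := by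
    rw [hpi]
    simp only [ContinuousLinearMap.pi_apply, hGeq0, he0]
    simp [ContinuousLinearMap.sub_apply, ContinuousLinearMap.add_apply, ContinuousLinearMap.smul_apply, ContinuousLinearMap.flip_apply, ContinuousLinearMap.proj_apply, smul_eq_mul, Pi.single_apply]
    ring
  have hR1 : fderiv ℝ (fun x : Fin 3 → ℝ => x ⨯₃ (x ⨯₃ grad p x)) P
      (Pi.single (1:Fin 3) 1) (1:Fin 3)
      = -(P 0 * P 0 * fderiv ℝ (fderiv ℝ p) P (Pi.single (1:Fin 3) 1 : Fin 3 → ℝ) (Pi.single (1:Fin 3) 1 : Fin 3 → ℝ)) + P 0 * P 1 * fderiv ℝ (fderiv ℝ p) P (Pi.single (1:Fin 3) 1 : Fin 3 → ℝ) (Pi.single (0:Fin 3) 1 : Fin 3 → ℝ) + P 0 * fderiv ℝ p P (Pi.single (0:Fin 3) 1 : Fin 3 → ℝ) + P 1 * P 2 * fderiv ℝ (fderiv ℝ p) P (Pi.single (1:Fin 3) 1 : Fin 3 → ℝ) (Pi.single (2:Fin 3) 1 : Fin 3 → ℝ) - P 2 * P 2 * fderiv ℝ (fderiv ℝ p) P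 (Pi.single (1:Fin 3) 1 : Fin 3 → ℝ) (Pi.single (1:Fin 3) 1 : Fin 3 → ℝ) + P 2 * fderiv ℝ p P (Pi.single (2:Fin 3) 1 : Fin 3 → ℝ) := by
    rw [hpi]
    simp only [ContinuousLinearMap.pi_apply, hGeq1, he1]
    simp [ContinuousLinearMap.sub_apply, ContinuousLinearMap.add_apply, ContinuousLinearMap.smul_apply, ContinuousLinearMap.flip_apply, ContinuousLinearMap.proj_apply, smul_eq_mul, Pi.single_apply]
    ring
  have hR2 : fderiv ℝ (fun x : Fin 3 → ℝ => x ⨯₃ (x ⨯₃ grad p x)) P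
      (Pi.single (2:Fin 3) 1) (2:Fin 3)
      = -(P 0 * P 0 * fderiv ℝ (fderiv ℝ p) P (Pi.single (2:Fin 3) 1 : Fin 3 → ℝ) (Pi.single (2:Fin 3) 1 : Fin 3 → ℝ)) + P 0 * P 2 * fderiv ℝ (fderiv ℝ p) P (Pi.single (2:Fin 3) 1 : Fin 3 → ℝ) (Pi.single (0:Fin 3) 1 : Fin 3 → ℝ) + P 0 * fderiv ℝ p P (Pi.single (0:Fin 3) 1 : Fin 3 → ℝ) - P 1 * P 1 * fderiv ℝ (fderiv ℝ p) P (Pi.single (2:Fin 3) 1 : Fin 3 → ℝ) (Pi.single (2:Fin 3) 1 : Fin 3 → ℝ) + P 1 * P 2 * fderiv ℝ (fderiv ℝ p) P (Pi.single (2:Fin 3) 1 : Fin 3 → ℝ) (Pi.single (1:Fin 3) 1 : Fin 3 → ℝ) + P 1 * fderiv ℝ p P (Pi.single (1:Fin 3) 1 : Fin 3 → ℝ) := by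
    rw [hpi]
    simp only [ContinuousLinearMap.pi_apply, hGeq2, he2]
    simp [ContinuousLinearMap.sub_apply, ContinuousLinearMap.add_apply, ContinuousLinearMap.smul_apply, ContinuousLinearMap.flip_apply, ContinuousLinearMap.proj_apply, smul_eq_mul, Pi.single_apply]
    ring
  rw [Fin.sum_univ_three, hL0, hL1, hL2]
  show _ = - div3 (fun x : Fin 3 → ℝ => x ⨯₃ (x ⨯₃ grad p x)) P
  rw [div3, Fin.sum_univ_three, hR0, hR1, hR2]
  rw [Hsymm (Pi.single (1:Fin 3) 1) (Pi.single (0:Fin 3) 1),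
    Hsymm (Pi.single (2:Fin 3) 1) (Pi.single (0:Fin 3) 1),
    Hsymm (Pi.single (2:Fin 3) 1) (Pi.single (1:Fin 3) 1)]
  ring
end

section
/- Let h̃ : ℝ³ → ℝ be twice continuously differentiable, and let ϑ, σ > 0. Define the Gibbs density p(Π) := exp(−(2ϑ/σ²) h̃(Π)). Then for every Π ∈ ℝ³ the stationary Fokker–Planck equation of the dissipative stochastic rigid body holds: −(Π × ∇h̃(Π)) · ∇p(Π) − ϑ div(Π ↦ p(Π) (Π × (Π × ∇h̃(Π))))(Π) + (σ²/2) Σ_{i=1}^{3} (Π × e_i) · ∇((Π × e_i) · ∇p)(Π) = 0. -/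
open Matrix

private lemma pd_coord (j : Fin 3) (x v : Fin 3 → ℝ) :
    fderiv ℝ (fun y : Fin 3 → ℝ => y j) x v = v j := by
  have : (fun y : Fin 3 → ℝ => y j)
      = (ContinuousLinearMap.proj j : (Fin 3 → ℝ) →L[ℝ] ℝ) := rfl
  rw [this, ContinuousLinearMap.fderiv]; rfl

private lemma pd_mul {f k : (Fin 3 → ℝ) → ℝ} {x : Fin 3 → ℝ}
    (hf : DifferentiableAt ℝ f x) (hk : DifferentiableAt ℝ k x) (v : Fin 3 → ℝ) :
    fderiv ℝ (fun y => f y * k y) x v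
      = fderiv ℝ f x v * k x + f x * fderiv ℝ k x v := by
  rw [fderiv_fun_mul hf hk]; simp; ring

private lemma pd_sub {f k : (Fin 3 → ℝ) → ℝ} {x : Fin 3 → ℝ}
    (hf : DifferentiableAt ℝ f x) (hk : DifferentiableAt ℝ k x) (v : Fin 3 → ℝ) :
    fderiv ℝ (fun y => f y - k y) x v = fderiv ℝ f x v - fderiv ℝ k x v := by
  rw [fderiv_fun_sub hf hk]; rfl

private lemma pd_add {f k : (Fin 3 → ℝ) → ℝ} {x : Fin 3 → ℝ}
    (hf : DifferentiableAt ℝ f x) (hk : DifferentiableAt ℝ k x) (v : Fin 3 → ℝ) :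
    fderiv ℝ (fun y => f y + k y) x v = fderiv ℝ f x v + fderiv ℝ k x v := by
  rw [fderiv_fun_add hf hk]; rfl

private lemma pd_exp {h : (Fin 3 → ℝ) → ℝ} (hh : Differentiable ℝ h) (c : ℝ)
    (x v : Fin 3 → ℝ) :
    fderiv ℝ (fun y => Real.exp (c * h y)) x v
      = c * Real.exp (c * h x) * fderiv ℝ h x v := by
  have h1 : HasFDerivAt (fun y => c * h y) (c • fderiv ℝ h x) x :=
    (hh x).hasFDerivAt.const_mul c
  have h3 : HasFDerivAt (fun y => Real.exp (c * h y))
      (Real.exp (c * h x) • c • fderiv ℝ h x) x :=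
    by have := (Real.hasDerivAt_exp (c * h x)).comp_hasFDerivAt x h1; exact this
  rw [h3.fderiv]; simp [mul_comm, mul_assoc, mul_left_comm]

private lemma pd_symm {h : (Fin 3 → ℝ) → ℝ} (hh : ContDiff ℝ 2 h) (x v w : Fin 3 → ℝ) :
    fderiv ℝ (fun y => fderiv ℝ h y v) x w = fderiv ℝ (fun y => fderiv ℝ h y w) x v := by
  have hd : Differentiable ℝ (fderiv ℝ h) :=
    (hh.fderiv_right (m := 1) le_rfl).differentiable one_ne_zero
  have key : ∀ u w' : Fin 3 → ℝ,
      fderiv ℝ (fun y => fderiv ℝ h y u) x w' = fderiv ℝ (fderiv ℝ h) x w' u := by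
    intro u w'
    have hc : HasFDerivAt (fderiv ℝ h) (fderiv ℝ (fderiv ℝ h) x) x := (hd x).hasFDerivAt
    have h4 : HasFDerivAt (fun y => fderiv ℝ h y u)
        ((ContinuousLinearMap.apply ℝ ℝ u).comp (fderiv ℝ (fderiv ℝ h) x)) x :=
      (ContinuousLinearMap.apply ℝ ℝ u).hasFDerivAt.comp x hc
    rw [h4.fderiv]; rfl
  rw [key v w, key w v]
  exact second_derivative_symmetric (fun y => ((hh.differentiable two_ne_zero) y).hasFDerivAt)
    (hd x).hasFDerivAt w v

set_option maxHeartbeats 2000000 in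
/-- For `h̃ : ℝ³ → ℝ` twice continuously differentiable and `ϑ, σ > 0`, the
Gibbs density `p(Π) = exp(−(2ϑ/σ²) h̃(Π))` satisfies the stationary Fokker–Planck equation of
the dissipative stochastic rigid body:
`−(Π × ∇h̃) · ∇p − ϑ div(p (Π × (Π × ∇h̃))) + (σ²/2) Σᵢ (Π × eᵢ) · ∇((· × eᵢ) · ∇p) = 0`. -/
theorem gibbs_density_stationary_fokker_planck
    (h : (Fin 3 → ℝ) → ℝ) (hh : ContDiff ℝ 2 h) (ϑ σ : ℝ) (hϑ : 0 < ϑ) (hσ : 0 < σ)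
    (p : (Fin 3 → ℝ) → ℝ)
    (hp : ∀ x, p x = Real.exp (-(2 * ϑ / σ ^ 2) * h x)) (P : Fin 3 → ℝ) :
    -((P ⨯₃ grad h P) ⬝ᵥ grad p P)
        - ϑ * div3 (fun x => p x • (x ⨯₃ (x ⨯₃ grad h x))) P
        + σ ^ 2 / 2 * ∑ i, (P ⨯₃ (Pi.single i 1 : Fin 3 → ℝ))
            ⬝ᵥ grad (fun x => (x ⨯₃ (Pi.single i 1 : Fin 3 → ℝ)) ⬝ᵥ grad p x) P
      = 0 := by
  have hpe : p = fun x => Real.exp (-(2 * ϑ / σ ^ 2) * h x) := funext hp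
  subst hpe
  set c : ℝ := -(2 * ϑ / σ ^ 2) with hcdef
  beta_reduce
  have hσ2 : σ ^ 2 ≠ 0 := by positivity
  have hhd : Differentiable ℝ h := hh.differentiable two_ne_zero
  have hG : ∀ v : Fin 3 → ℝ, Differentiable ℝ (fun x => fderiv ℝ h x v) := fun v =>
    ((hh.fderiv_right le_rfl).clm_apply contDiff_const).differentiable one_ne_zero
  have hpd : Differentiable ℝ (fun x : Fin 3 → ℝ => Real.exp (c * h x)) :=
    (hhd.const_mul c).exp
  -- explicit forms of the inner scalar fields of the third term
  have hq0 : (fun x : Fin 3 → ℝ =>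
        (x ⨯₃ (Pi.single (0 : Fin 3) 1 : Fin 3 → ℝ))
          ⬝ᵥ grad (fun x => Real.exp (c * h x)) x)
      = fun x => x 2 * (c * Real.exp (c * h x) * fderiv ℝ h x (Pi.single 1 1))
          - x 1 * (c * Real.exp (c * h x) * fderiv ℝ h x (Pi.single 2 1)) := by
    funext x
    simp [grad, cross_apply, dotProduct, Fin.sum_univ_three, Pi.single_apply,
      pd_exp hhd]
    ring
  have hq1 : (fun x : Fin 3 → ℝ =>
        (x ⨯₃ (Pi.single (1 : Fin 3) 1 : Fin 3 → ℝ))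
          ⬝ᵥ grad (fun x => Real.exp (c * h x)) x)
      = fun x => x 0 * (c * Real.exp (c * h x) * fderiv ℝ h x (Pi.single 2 1))
          - x 2 * (c * Real.exp (c * h x) * fderiv ℝ h x (Pi.single 0 1)) := by
    funext x
    simp [grad, cross_apply, dotProduct, Fin.sum_univ_three, Pi.single_apply,
      pd_exp hhd]
    ring
  have hq2 : (fun x : Fin 3 → ℝ =>
        (x ⨯₃ (Pi.single (2 : Fin 3) 1 : Fin 3 → ℝ))
          ⬝ᵥ grad (fun x => Real.exp (c * h x)) x)
      = fun x => x 1 * (c * Real.exp (c * h x) * fderiv ℝ h x (Pi.single 0 1))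
          - x 0 * (c * Real.exp (c * h x) * fderiv ℝ h x (Pi.single 1 1)) := by
    funext x
    simp [grad, cross_apply, dotProduct, Fin.sum_univ_three, Pi.single_apply,
      pd_exp hhd]
    ring
  -- componentwise differentiability of the vector field in the divergence term
  have hcomp0 : DifferentiableAt ℝ
      (fun x : Fin 3 → ℝ =>
        (Real.exp (c * h x) • (x ⨯₃ (x ⨯₃ grad h x)) : Fin 3 → ℝ) 0) P := by
    simp only [grad, cross_apply, Pi.smul_apply, smul_eq_mul, Matrix.cons_val_zero,
      Matrix.cons_val_one, Matrix.head_cons, Matrix.cons_val_two, Matrix.tail_cons]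
    fun_prop
  have hcomp1 : DifferentiableAt ℝ
      (fun x : Fin 3 → ℝ =>
        (Real.exp (c * h x) • (x ⨯₃ (x ⨯₃ grad h x)) : Fin 3 → ℝ) 1) P := by
    simp only [grad, cross_apply, Pi.smul_apply, smul_eq_mul, Matrix.cons_val_zero,
      Matrix.cons_val_one, Matrix.head_cons, Matrix.cons_val_two, Matrix.tail_cons]
    fun_prop
  have hcomp2 : DifferentiableAt ℝ
      (fun x : Fin 3 → ℝ =>
        (Real.exp (c * h x) • (x ⨯₃ (x ⨯₃ grad h x)) : Fin 3 → ℝ) 2) P := by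
    simp only [grad, cross_apply, Pi.smul_apply, smul_eq_mul, Matrix.cons_val_zero,
      Matrix.cons_val_one, Matrix.head_cons, Matrix.cons_val_two, Matrix.tail_cons]
    fun_prop
  have hcomp : ∀ i : Fin 3, DifferentiableAt ℝ
      (fun x : Fin 3 → ℝ =>
        (Real.exp (c * h x) • (x ⨯₃ (x ⨯₃ grad h x)) : Fin 3 → ℝ) i) P := by
    intro i
    fin_cases i
    · exact hcomp0
    · exact hcomp1
    · exact hcomp2
  have hdF : fderiv ℝ
        (fun x : Fin 3 → ℝ => Real.exp (c * h x) • (x ⨯₃ (x ⨯₃ grad h x))) P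
      = ContinuousLinearMap.pi (fun i => fderiv ℝ
          (fun x : Fin 3 → ℝ =>
            (Real.exp (c * h x) • (x ⨯₃ (x ⨯₃ grad h x)) : Fin 3 → ℝ) i) P) :=
    fderiv_pi hcomp
  rw [Fin.sum_univ_three, hq0, hq1, hq2]
  simp only [div3, hdF, ContinuousLinearMap.pi_apply]
  rw [Fin.sum_univ_three]
  simp only [grad, cross_apply, dotProduct, Pi.smul_apply, smul_eq_mul,
    Fin.sum_univ_three, Matrix.cons_val_zero, Matrix.cons_val_one, Matrix.head_cons,
    Matrix.cons_val_two, Matrix.tail_cons]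
  simp (disch := fun_prop) only [pd_mul, pd_sub, pd_add, pd_coord, pd_exp hhd]
  simp only [Pi.single_apply]
  simp
  rw [pd_symm hh P (Pi.single 0 1) (Pi.single 1 1),
    pd_symm hh P (Pi.single 0 1) (Pi.single 2 1),
    pd_symm hh P (Pi.single 1 1) (Pi.single 2 1)]
  rw [hcdef]
  field_simp
  ring
end

section
/- Let v = (α, β, γ) ∈ ℝ³, let Λ be the 3 × 3 real antisymmetric matrix with Λx = v × x for all x ∈ ℝ³, let k > 0, and set A = kI₃ + Λ. Then the integral ∫_0^∞ exp(−ρA) exp(−ρAᵀ) dρ converges and equals (1/(2k)) I₃. -/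
open Matrix MeasureTheory

lemma cnc_integral_exp_neg_mul {b : ℝ} (hb : 0 < b) :
    ∫ x in Set.Ioi (0 : ℝ), Real.exp (-b * x) = 1 / b := by
  have key : ∀ x ∈ Set.Ici (0:ℝ),
      HasDerivAt (fun x : ℝ => -Real.exp (-b * x) / b) (Real.exp (-b * x)) x := by
    intro x _
    have : HasDerivAt (fun x : ℝ => -b * x) (-b) x := by
      simpa using (hasDerivAt_id x).const_mul (-b)
    have := (this.exp.neg).div_const b
    simpa [mul_comm, mul_div_assoc, hb.ne'] using this
  have htend : Filter.Tendsto (fun x => -Real.exp (-b * x) / b) Filter.atTop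
      (nhds (-0 / b)) := by
    refine Filter.Tendsto.div_const (Filter.Tendsto.neg ?_) _
    exact Real.tendsto_exp_atBot.comp
      (Filter.tendsto_id.const_mul_atTop_of_neg (neg_neg_iff_pos.2 hb))
  have := integral_Ioi_of_hasDerivAt_of_tendsto' key
    (exp_neg_integrableOn_Ioi 0 hb) htend
  rw [this]
  simp [hb.ne']
  ring

/-- Let `v = (α, β, γ) ∈ ℝ³`, let `Λ` be the `3 × 3` real antisymmetric
matrix with `Λx = v × x` for all `x`, let `k > 0`, and set `A = k I₃ + Λ`.  Then the integral
`∫_0^∞ exp(−ρA) exp(−ρAᵀ) dρ` converges (entrywise) and equals `(1/(2k)) I₃`. -/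
theorem coloured_noise_covariance (α β γ k : ℝ) (hk : 0 < k)
    (Λ : Matrix (Fin 3) (Fin 3) ℝ) (hΛasymm : Λᵀ = -Λ)
    (hΛ : ∀ x : Fin 3 → ℝ, Λ *ᵥ x = (![α, β, γ] : Fin 3 → ℝ) ⨯₃ x)
    (A : Matrix (Fin 3) (Fin 3) ℝ) (hA : A = k • (1 : Matrix (Fin 3) (Fin 3) ℝ) + Λ) :
    (∀ i j, IntegrableOn (fun ρ : ℝ =>
        (NormedSpace.exp (-(ρ • A)) * NormedSpace.exp (-(ρ • Aᵀ))) i j) (Set.Ici 0)) ∧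
      (Matrix.of fun i j => ∫ ρ in Set.Ici (0 : ℝ),
          (NormedSpace.exp (-(ρ • A)) * NormedSpace.exp (-(ρ • Aᵀ))) i j)
        = (1 / (2 * k)) • (1 : Matrix (Fin 3) (Fin 3) ℝ) := by
  have hAt : Aᵀ = k • (1 : Matrix (Fin 3) (Fin 3) ℝ) - Λ := by
    rw [hA, transpose_add, transpose_smul, transpose_one, hΛasymm]
    abel
  -- the integrand simplifies to a scalar exponential
  have key : ∀ ρ : ℝ, NormedSpace.exp (-(ρ • A)) * NormedSpace.exp (-(ρ • Aᵀ))
      = Real.exp (-(2 * k) * ρ) • (1 : Matrix (Fin 3) (Fin 3) ℝ) := by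
    intro ρ
    have hAAt : Commute A Aᵀ := by
      rw [hAt, hA]
      have hxΛ : Commute (k • (1 : Matrix (Fin 3) (Fin 3) ℝ) + Λ) Λ :=
        ((Commute.one_left Λ).smul_left k).add_left (Commute.refl Λ)
      have hx1 : Commute (k • (1 : Matrix (Fin 3) (Fin 3) ℝ) + Λ)
          (k • (1 : Matrix (Fin 3) (Fin 3) ℝ)) := (Commute.one_right _).smul_right k
      exact hx1.sub_right hxΛ
    have hcomm : Commute (-(ρ • A)) (-(ρ • Aᵀ)) :=
      ((hAAt.smul_left ρ).smul_right ρ).neg_left.neg_right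
    rw [← Matrix.exp_add_of_commute _ _ hcomm]
    have hsum : -(ρ • A) + -(ρ • Aᵀ)
        = (-(2 * k) * ρ) • (1 : Matrix (Fin 3) (Fin 3) ℝ) := by
      rw [hAt, hA]
      module
    rw [hsum, Matrix.smul_one_eq_diagonal, Matrix.exp_diagonal]
    rw [Matrix.smul_one_eq_diagonal]
    congr 1
    rw [Pi.exp_def]
    funext j
    rw [← Real.exp_eq_exp_ℝ]
  have hint : IntegrableOn (fun ρ : ℝ => Real.exp (-(2 * k) * ρ)) (Set.Ici 0) := by
    rw [integrableOn_Ici_iff_integrableOn_Ioi]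
    exact exp_neg_integrableOn_Ioi 0 (by linarith)
  constructor
  · intro i j
    have : (fun ρ : ℝ =>
        (NormedSpace.exp (-(ρ • A)) * NormedSpace.exp (-(ρ • Aᵀ))) i j)
        = fun ρ : ℝ => Real.exp (-(2 * k) * ρ) * (1 : Matrix (Fin 3) (Fin 3) ℝ) i j := by
      funext ρ; rw [key ρ]; simp [Matrix.smul_apply]
    rw [this]
    exact hint.mul_const _
  · ext i j
    simp only [Matrix.of_apply]
    have : (fun ρ : ℝ =>
        (NormedSpace.exp (-(ρ • A)) * NormedSpace.exp (-(ρ • Aᵀ))) i j)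
        = fun ρ : ℝ => Real.exp (-(2 * k) * ρ) * (1 : Matrix (Fin 3) (Fin 3) ℝ) i j := by
      funext ρ; rw [key ρ]; simp [Matrix.smul_apply]
    rw [this]
    rw [MeasureTheory.integral_mul_const, integral_Ici_eq_integral_Ioi,
      cnc_integral_exp_neg_mul (by linarith : (0:ℝ) < 2 * k)]
    simp [Matrix.smul_apply]
end

section
/- Let v = (α, β, γ) ∈ ℝ³, let Λ be the 3 × 3 real antisymmetric matrix with Λx = v × x for all x ∈ ℝ³, let k > 0, and set A = kI₃ + Λ and Σ = (1/(2k)) I₃. Then A is invertible and Σ (A⁻¹)ᵀ − A⁻¹ Σ = (1/(k (α² + β² + γ² + k²))) Λ. -/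
open Matrix

/-- Let `v = (α, β, γ) ∈ ℝ³`, let `Λ` be the `3 × 3` real antisymmetric
matrix with `Λx = v × x` for all `x`, let `k > 0`, and set `A = k I₃ + Λ` and
`Σ = (1/(2k)) I₃`.  Then `A` is invertible and
`Σ(A⁻¹)ᵀ − A⁻¹Σ = (1/(k(α² + β² + γ² + k²))) Λ`. -/
theorem coloured_noise_levy_area (α β γ k : ℝ) (hk : 0 < k)
    (Λ : Matrix (Fin 3) (Fin 3) ℝ) (hΛasymm : Λᵀ = -Λ)
    (hΛ : ∀ x : Fin 3 → ℝ, Λ *ᵥ x = (![α, β, γ] : Fin 3 → ℝ) ⨯₃ x)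
    (A S : Matrix (Fin 3) (Fin 3) ℝ)
    (hA : A = k • (1 : Matrix (Fin 3) (Fin 3) ℝ) + Λ)
    (hS : S = (1 / (2 * k)) • (1 : Matrix (Fin 3) (Fin 3) ℝ)) :
    IsUnit A ∧
      S * (A⁻¹)ᵀ - A⁻¹ * S = (1 / (k * (α ^ 2 + β ^ 2 + γ ^ 2 + k ^ 2))) • Λ := by
  have hk' : k ≠ 0 := ne_of_gt hk
  have hd : k * (α ^ 2 + β ^ 2 + γ ^ 2 + k ^ 2) ≠ 0 := by positivity
  -- Determine Λ explicitly
  have hΛeq : Λ = !![0, -γ, β; γ, 0, -α; -β, α, 0] := by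
    ext i j
    have h := congrFun (hΛ (Pi.single j 1)) i
    rw [mulVec_single] at h
    fin_cases i <;> fin_cases j <;>
      simp [crossProduct, Pi.single_apply] at h ⊢ <;> linarith
  set d : ℝ := k * (α ^ 2 + β ^ 2 + γ ^ 2 + k ^ 2) with hdef
  set M : Matrix (Fin 3) (Fin 3) ℝ :=
    ![![k ^ 2 + α ^ 2, α * β + k * γ, α * γ - k * β],
      ![α * β - k * γ, k ^ 2 + β ^ 2, β * γ + k * α],
      ![α * γ + k * β, β * γ - k * α, k ^ 2 + γ ^ 2]] with hM
  -- A * M = d • 1  (purely polynomial identity)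
  have hAM : A * M = d • 1 := by
    subst hA hΛeq
    ext i j
    rw [Matrix.mul_apply, Fin.sum_univ_three]
    fin_cases i <;> fin_cases j <;>
      · simp [hM, hdef, mul_apply, Fin.sum_univ_three, Matrix.one_apply]
        ring
  have hAB : A * ((1 / d) • M) = 1 := by
    rw [Matrix.mul_smul, hAM, smul_smul, one_div, inv_mul_cancel₀ hd, one_smul]
  have hU : IsUnit A :=
    @isUnit_of_invertible _ _ A (invertibleOfRightInverse A ((1 / d) • M) hAB)
  have hAinv : A⁻¹ = (1 / d) • M := inv_eq_right_inv hAB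
  refine ⟨hU, ?_⟩
  -- Antisymmetric part of M
  have hMT : Mᵀ - M = (2 * k) • Λ := by
    subst hΛeq
    ext i j
    rw [Matrix.sub_apply, Matrix.transpose_apply, Matrix.smul_apply]
    fin_cases i <;> fin_cases j <;> simp [hM] <;> ring
  rw [hS, hAinv, transpose_smul, smul_one_mul, mul_smul_one, smul_smul, smul_smul,
    ← smul_sub, hMT, smul_smul]
  congr 1
  field_simp
end
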